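/- The type A higher zigzag algebra Z^d_s = Triv_{d+1}((Λ^d_s)^!) is isomorphic to the untwisted trivial extension Triv((Λ^d_s)^!), and hence Z^d_s is a symmetric algebra. -/

import Mathlib

/-- Paths of a quiver, bundled with their endpoints. -/
abbrev PathIdx (V : Type) [Quiver.{0} V] := Σ a b : V, Quiver.Path a b

/-- The path algebra `FQ`: the vector space with basis the paths of the quiver. -/
abbrev PathAlg (F : Type) [Field F] (V : Type) [Quiver.{0} V] := PathIdx V →₀ F

/-- Composition of composable bundled paths. -/
def pcomp {V : Type} [Quiver.{0} V] (p q : PathIdx V) (h : p.2.1 = q.1) : PathIdx V :=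
  ⟨p.1, q.2.1, p.2.2.comp (q.2.2.cast h.symm rfl)⟩

/-- Multiplication of the path algebra: composition of composable paths, `0` otherwise. -/
noncomputable def pmul {F : Type} [Field F] {V : Type} [Quiver.{0} V] [DecidableEq V]
    (x y : PathAlg F V) : PathAlg F V :=
  x.sum fun p cp => y.sum fun q cq =>
    if h : p.2.1 = q.1 then Finsupp.single (pcomp p q h) (cp * cq) else 0

/-- The unit of the path algebra: the sum of the trivial paths at the vertices. -/
noncomputable def pone (F : Type) [Field F] (V : Type) [Quiver.{0} V] [Fintype V] :
    PathAlg F V :=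
  ∑ a : V, Finsupp.single (⟨a, a, Quiver.Path.nil⟩ : PathIdx V) 1

/-- `π : FQ → Λ` presents the algebra `Λ` as the quotient of the path algebra of the
quiver by the two-sided ideal generated by the relation set `Rel`. -/
def IsPresentation {F : Type} [Field F] {V : Type} [Quiver.{0} V] [DecidableEq V] [Fintype V]
    {Λ : Type} [Ring Λ] [Algebra F Λ] (π : PathAlg F V → Λ) (Rel : Set (PathAlg F V)) :
    Prop :=
  (∀ x y, π (x + y) = π x + π y) ∧
  (∀ (c : F) (x), π (c • x) = c • π x) ∧
  (∀ x y, π (pmul x y) = π x * π y) ∧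
  π (pone F V) = 1 ∧
  Function.Surjective π ∧
  ∀ x, π x = 0 ↔ x ∈ Submodule.span F {y | ∃ a b, ∃ r ∈ Rel, y = pmul a (pmul r b)}
/-- Vertices of the type `A` simplex quiver: tuples of `d+1` nonnegative integers
summing to `s - 1`. -/
def Vx (d s : ℕ) : Type := {x : Fin (d + 1) → ℕ // ∑ i, x i = s - 1}

/-- Lower coordinate `i.castSucc` by one and raise coordinate `i.succ` by one. -/
def stepv {d s : ℕ} (x : Vx d s) (i : Fin d) : Fin (d + 1) → ℕ :=
  Function.update (Function.update x.1 i.castSucc (x.1 i.castSucc - 1)) i.succ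
    (x.1 i.succ + 1)

/-- Arrows of the simplex quiver: in direction `i`, from `x` to `x - e_{i} + e_{i+1}`,
whenever the coordinate being lowered is positive. -/
def Ar (d s : ℕ) (x y : Vx d s) : Type :=
  {i : Fin d // 1 ≤ x.1 i.castSucc ∧ y.1 = stepv x i}

instance (d s : ℕ) : Quiver.{0} (Vx d s) := ⟨Ar d s⟩

instance (d s : ℕ) : DecidableEq (Vx d s) :=
  Subtype.instDecidableEq

instance (d s : ℕ) : Finite (Vx d s) := by
  have hb : ∀ x : Vx d s, ∀ i, x.1 i < s + 1 := by
    intro x i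
    have h1 : x.1 i ≤ ∑ j, x.1 j :=
      Finset.single_le_sum (fun j _ => Nat.zero_le (x.1 j)) (Finset.mem_univ i)
    have h2 := x.2
    omega
  exact Finite.of_injective
    (fun x : Vx d s => fun i => (⟨x.1 i, hb x i⟩ : Fin (s + 1)))
    (by
      intro a b h
      apply Subtype.ext
      funext i
      have := congrFun h i
      simpa [Fin.ext_iff] using this)

noncomputable instance (d s : ℕ) : Fintype (Vx d s) := Fintype.ofFinite _

/-- The bundled length-two path through two composable arrows. -/
def pathTwo {d s : ℕ} {x y z : Vx d s} (a1 : Ar d s x y) (a2 : Ar d s y z) :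
    PathIdx (Vx d s) :=
  ⟨x, z, (Quiver.Path.nil.cons (a1 : x ⟶ y)).cons (a2 : y ⟶ z)⟩

/-- The commutation relations `α_i α_j - α_j α_i` (terms falling off the quiver being
read as zero). -/
def RelComm (F : Type) [Field F] (d s : ℕ) : Set (PathAlg F (Vx d s)) :=
  {r | ∃ (x y z : Vx d s) (a1 : Ar d s x y) (a2 : Ar d s y z),
      (∃ (y' z' : Vx d s) (b1 : Ar d s x y') (b2 : Ar d s y' z'),
        b1.1 = a2.1 ∧ b2.1 = a1.1 ∧
        r = Finsupp.single (pathTwo a1 a2) 1 - Finsupp.single (pathTwo b1 b2) 1) ∨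
      ((¬ ∃ (y' z' : Vx d s) (b1 : Ar d s x y') (b2 : Ar d s y' z'),
          b1.1 = a2.1 ∧ b2.1 = a1.1) ∧
        r = Finsupp.single (pathTwo a1 a2) 1)}

/-- The relations of the quadratic dual `(Λ^d_s)^!`: zero relations `f_i f_i = 0`
and commutativity relations `f_i f_j = f_j f_i` whenever both composites exist. -/
def RelDual (F : Type) [Field F] (d s : ℕ) : Set (PathAlg F (Vx d s)) :=
  {r | ∃ (x y z : Vx d s) (a1 : Ar d s x y) (a2 : Ar d s y z),
      (a1.1 = a2.1 ∧ r = Finsupp.single (pathTwo a1 a2) 1) ∨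
      (∃ (y' z' : Vx d s) (b1 : Ar d s x y') (b2 : Ar d s y' z'),
        b1.1 = a2.1 ∧ b2.1 = a1.1 ∧
        r = Finsupp.single (pathTwo a1 a2) 1 - Finsupp.single (pathTwo b1 b2) 1)}

/-- The list of directions of the arrows along a path in the simplex quiver. -/
def dirList {d s : ℕ} : ∀ {a b : Vx d s}, Quiver.Path a b → List (Fin d)
  | _, _, Quiver.Path.nil => []
  | _, _, Quiver.Path.cons p e => dirList p ++ [(e : Ar d s _ _).1]
section Aux

lemma pmul_single_single {F : Type} [Field F] {V : Type} [Quiver.{0} V] [DecidableEq V]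
    (p q : PathIdx V) (c c' : F) :
    pmul (Finsupp.single p c) (Finsupp.single q c') =
      if h : p.2.1 = q.1 then Finsupp.single (pcomp p q h) (c * c') else 0 := by
  unfold pmul
  rw [Finsupp.sum_single_index, Finsupp.sum_single_index]
  · split <;> simp
  · rw [Finsupp.sum_single_index] <;> split <;> simp

lemma pcomp_nil_left {V : Type} [Quiver.{0} V] (p : PathIdx V) :
    pcomp ⟨p.1, p.1, Quiver.Path.nil⟩ p rfl = p := by
  obtain ⟨a, b, q⟩ := p
  simp [pcomp]

lemma pcomp_nil_right {V : Type} [Quiver.{0} V] (p : PathIdx V) :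
    pcomp p ⟨p.2.1, p.2.1, Quiver.Path.nil⟩ rfl = p := by
  obtain ⟨a, b, q⟩ := p
  simp [pcomp]

lemma update_mul (d : ℕ) (G : Fin (d + 1) → ℕ) (k : Fin (d + 1)) (v : ℕ) :
    (fun j : Fin (d + 1) => (j : ℕ) * Function.update G k v j) =
      Function.update (fun j : Fin (d + 1) => (j : ℕ) * G j) k ((k : ℕ) * v) := by
  funext j
  rcases eq_or_ne j k with rfl | hj
  · simp
  · simp [Function.update_of_ne hj]

lemma w_step {d s : ℕ} (x : Vx d s) (i : Fin d) (h : 1 ≤ x.1 i.castSucc) :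
    ∑ j : Fin (d + 1), (j : ℕ) * stepv x i j =
      (∑ j : Fin (d + 1), (j : ℕ) * x.1 j) + 1 := by
  have hne : i.succ ≠ i.castSucc := (Fin.castSucc_lt_succ : i.castSucc < i.succ).ne'
  unfold stepv
  rw [show (fun j : Fin (d+1) => (j : ℕ) * Function.update (Function.update x.1 i.castSucc
      (x.1 i.castSucc - 1)) i.succ (x.1 i.succ + 1) j) = _ from update_mul d _ i.succ _,
    Finset.sum_update_of_mem (Finset.mem_univ _),
    show (fun j : Fin (d+1) => (j : ℕ) * Function.update x.1 i.castSucc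
      (x.1 i.castSucc - 1) j) = _ from update_mul d _ i.castSucc _,
    Finset.sum_update_of_mem (by simp [hne.symm])]
  rw [Finset.sum_eq_sum_sdiff_singleton_add (Finset.mem_univ i.succ)
      (fun j : Fin (d+1) => (j : ℕ) * x.1 j),
    Finset.sum_eq_sum_sdiff_singleton_add
      (show i.castSucc ∈ Finset.univ \ {i.succ} by simp [hne.symm])
      (fun j : Fin (d+1) => (j : ℕ) * x.1 j)]
  have h1 : (i.castSucc : ℕ) = (i : ℕ) := rfl
  have h2 : (i.succ : ℕ) = (i : ℕ) + 1 := rfl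
  rw [h1, h2]
  obtain ⟨t, ht⟩ : ∃ t, x.1 i.castSucc = t + 1 := ⟨x.1 i.castSucc - 1, by omega⟩
  rw [ht]
  ring_nf
  simp [Nat.add_sub_cancel]

lemma len_eq {d s : ℕ} {a b : Vx d s} (p : Quiver.Path a b) :
    ∑ j : Fin (d + 1), (j : ℕ) * b.1 j
      = (∑ j : Fin (d + 1), (j : ℕ) * a.1 j) + p.length := by
  induction p with
  | nil => simp
  | cons q e ih =>
    rename_i c b'
    have e' : Ar d s c b' := e
    have h1 : 1 ≤ c.1 e'.1.castSucc := e'.2.1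
    have h2 : b'.1 = stepv c e'.1 := e'.2.2
    rw [Quiver.Path.length_cons]
    have hs := w_step c e'.1 h1
    have hb : ∑ j : Fin (d + 1), (j : ℕ) * b'.1 j
        = ∑ j : Fin (d + 1), (j : ℕ) * stepv c e'.1 j :=
      Finset.sum_congr rfl (fun j _ => by rw [congrFun h2 j])
    rw [hb]
    omega

end Aux
/-- The type `A` higher zigzag algebra `Z^d_s = Triv_{d+1}((Λ^d_s)^!)` is isomorphic to
the untwisted trivial extension `Triv((Λ^d_s)^!)`, and hence `Z^d_s` is a symmetric
algebra (it carries a nondegenerate associative *symmetric* bilinear form).  Here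
`Λ^!` is presented by the simplex quiver with zero and anticommutativity-free relations,
and `ζ = ζ^d` is the automorphism multiplying (the image of) a path `p` by
`(-1)^{d·length p}`. -/
theorem stmt_11 (F : Type) [Field F] (d s : ℕ) (hd : 1 ≤ d) (hs : 1 ≤ s)
    (Λ : Type) [Ring Λ] [Algebra F Λ]
    (π : PathAlg F (Vx d s) → Λ) (hπ : IsPresentation π (RelDual F d s))
    (ζ : Λ → Λ)
    (hζadd : ∀ x y, ζ (x + y) = ζ x + ζ y)
    (hζsmul : ∀ (c : F) (x), ζ (c • x) = c • ζ x)
    (hζmul : ∀ x y, ζ (x * y) = ζ x * ζ y)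
    (hζpath : ∀ p : PathIdx (Vx d s),
      ζ (π (Finsupp.single p 1)) = ((-1 : F) ^ (d * p.2.2.length)) • π (Finsupp.single p 1)) :
    ∀ mulTw mulUn : (Λ × (Λ →ₗ[F] F)) → (Λ × (Λ →ₗ[F] F)) → (Λ × (Λ →ₗ[F] F)),
      (mulTw = fun p q => (p.1 * q.1,
          p.2.comp (LinearMap.mulLeft F q.1) + q.2.comp (LinearMap.mulRight F (ζ p.1)))) →
      (mulUn = fun p q => (p.1 * q.1,
          p.2.comp (LinearMap.mulLeft F q.1) + q.2.comp (LinearMap.mulRight F p.1))) →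
      -- Z^d_s ≅ Triv(Λ^!)
      (∃ Φ : (Λ × (Λ →ₗ[F] F)) → (Λ × (Λ →ₗ[F] F)),
        Function.Bijective Φ ∧
        (∀ x y, Φ (x + y) = Φ x + Φ y) ∧
        (∀ (c : F) (x), Φ (c • x) = c • Φ x) ∧
        (∀ x y, Φ (mulTw x y) = mulUn (Φ x) (Φ y)) ∧
        Φ ((1 : Λ), (0 : Λ →ₗ[F] F)) = ((1 : Λ), (0 : Λ →ₗ[F] F))) ∧
      -- Z^d_s is symmetric
      (∃ B : (Λ × (Λ →ₗ[F] F)) → (Λ × (Λ →ₗ[F] F)) → F,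
        (∀ x x' y, B (x + x') y = B x y + B x' y) ∧
        (∀ x y y', B x (y + y') = B x y + B x y') ∧
        (∀ (c : F) (x y), B (c • x) y = c * B x y) ∧
        (∀ (c : F) (x y), B x (c • y) = c * B x y) ∧
        (∀ x, (∀ y, B x y = 0) → x = 0) ∧
        (∀ x, (∀ y, B y x = 0) → x = 0) ∧
        (∀ x y z, B (mulTw x y) z = B x (mulTw y z)) ∧
        (∀ x y, B x y = B y x)) := by
  classical
  obtain ⟨hadd, hsmul, hmul, hone, hsurj, -⟩ := hπ
  intro mulTw mulUn hTw hUn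
  subst hTw hUn
  have hzero : π 0 = 0 := by
    have h := hadd 0 0
    rw [add_zero] at h
    exact (left_eq_add.mp h)
  set w : Vx d s → ℕ := fun v => ∑ j : Fin (d + 1), (j : ℕ) * v.1 j with hwdef
  set ε : Vx d s → F := fun v => (-1 : F) ^ (d * w v) with hεdef
  set u : Λ := ∑ a : Vx d s,
    ε a • π (Finsupp.single (⟨a, a, Quiver.Path.nil⟩ : PathIdx (Vx d s)) 1) with hudef
  have hsingle_smul : ∀ (p : PathIdx (Vx d s)) (c : F),
      π (Finsupp.single p c) = c • π (Finsupp.single p 1) := by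
    intro p c
    rw [← hsmul]
    congr 1
    simp [Finsupp.smul_single]
  have hleftmul : ∀ (a : Vx d s) (p : PathIdx (Vx d s)),
      pmul (Finsupp.single (⟨a, a, Quiver.Path.nil⟩ : PathIdx (Vx d s)) (1 : F))
        (Finsupp.single p 1) = if a = p.1 then Finsupp.single p 1 else 0 := by
    intro a p
    rw [pmul_single_single]
    by_cases h : a = p.1
    · subst h
      simp [pcomp_nil_left p]
    · simp [h]
  have hrightmul : ∀ (b : Vx d s) (p : PathIdx (Vx d s)),
      pmul (Finsupp.single p (1 : F))
        (Finsupp.single (⟨b, b, Quiver.Path.nil⟩ : PathIdx (Vx d s)) 1)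
        = if p.2.1 = b then Finsupp.single p 1 else 0 := by
    intro b p
    rw [pmul_single_single]
    by_cases h : p.2.1 = b
    · subst h
      simp [pcomp_nil_right p]
    · simp [h]
  have hL : ∀ p : PathIdx (Vx d s),
      u * π (Finsupp.single p 1) = ε p.1 • π (Finsupp.single p 1) := by
    intro p
    rw [hudef, Finset.sum_mul]
    have hterm : ∀ a : Vx d s,
        (ε a • π (Finsupp.single (⟨a, a, Quiver.Path.nil⟩ : PathIdx (Vx d s)) 1))
            * π (Finsupp.single p 1)
          = if a = p.1 then ε a • π (Finsupp.single p 1) else 0 := by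
      intro a
      rw [smul_mul_assoc, ← hmul, hleftmul]
      by_cases h : a = p.1
      · simp [h]
      · simp [h, hzero]
    rw [Finset.sum_congr rfl (fun a _ => hterm a), Finset.sum_ite_eq' Finset.univ p.1]
    simp
  have hR : ∀ p : PathIdx (Vx d s),
      π (Finsupp.single p 1) * u = ε p.2.1 • π (Finsupp.single p 1) := by
    intro p
    rw [hudef, Finset.mul_sum]
    have hterm : ∀ b : Vx d s,
        π (Finsupp.single p 1)
            * (ε b • π (Finsupp.single (⟨b, b, Quiver.Path.nil⟩ : PathIdx (Vx d s)) 1))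
          = if p.2.1 = b then ε b • π (Finsupp.single p 1) else 0 := by
      intro b
      rw [mul_smul_comm, ← hmul, hrightmul]
      by_cases h : p.2.1 = b
      · simp [h]
      · simp [h, hzero]
    rw [Finset.sum_congr rfl (fun b _ => hterm b), Finset.sum_ite_eq Finset.univ p.2.1]
    simp
  have hsq : ∀ a : Vx d s, ε a * ε a = 1 := by
    intro a
    rw [hεdef]
    simp only
    rw [← pow_add, ← two_mul, pow_mul, neg_one_sq, one_pow]
  have huu : u * u = 1 := by
    have h1 : u * u = ∑ a : Vx d s,
        ε a • (π (Finsupp.single (⟨a, a, Quiver.Path.nil⟩ : PathIdx (Vx d s)) 1) * u) := by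
      conv_lhs => rw [hudef, Finset.sum_mul]
      exact Finset.sum_congr rfl fun a _ => smul_mul_assoc _ _ _
    rw [h1]
    have h2 : ∀ a : Vx d s,
        ε a • (π (Finsupp.single (⟨a, a, Quiver.Path.nil⟩ : PathIdx (Vx d s)) 1) * u)
          = π (Finsupp.single (⟨a, a, Quiver.Path.nil⟩ : PathIdx (Vx d s)) 1) := by
      intro a
      rw [hR ⟨a, a, Quiver.Path.nil⟩, smul_smul, hsq, one_smul]
    rw [Finset.sum_congr rfl (fun a _ => h2 a), ← hone]
    congr 1
    unfold pone
    exact (map_sum (AddMonoidHom.mk' π hadd) _ _).symm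
  have hconj : ∀ p : PathIdx (Vx d s),
      ζ (π (Finsupp.single p 1)) = u * π (Finsupp.single p 1) * u := by
    intro p
    rw [hL p, smul_mul_assoc, hR p, hζpath p, smul_smul]
    congr 1
    rw [hεdef]
    simp only
    have hlen : w p.2.1 = w p.1 + p.2.2.length := len_eq p.2.2
    rw [← pow_add, show d * w p.1 + d * w p.2.1 = 2 * (d * w p.1) + d * p.2.2.length by
      rw [hlen]; ring]
    rw [pow_add, pow_mul (-1 : F) 2, neg_one_sq, one_pow, one_mul]
  have hζ0 : ζ 0 = 0 := by
    have h := hζsmul 0 0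
    simpa using h
  have hζconj : ∀ x : Λ, ζ x = u * x * u := by
    intro x
    obtain ⟨y, rfl⟩ := hsurj x
    induction y using Finsupp.induction with
    | zero =>
      rw [hzero, hζ0, mul_zero, zero_mul]
    | single_add p c f hpf hc ih =>
      rw [hadd, hζadd, ih, hsingle_smul, hζsmul, hconj p]
      rw [mul_add, add_mul, mul_smul_comm, smul_mul_assoc]
  have key : ∀ z a : Λ, z * (u * ζ a) = z * (a * u) := by
    intro z a
    rw [hζconj a, show u * (u * a * u) = (u * u) * (a * u) by
      rw [mul_assoc u a u, ← mul_assoc], huu, one_mul]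
  -- the isomorphism Φ
  constructor
  · refine ⟨fun x => (x.1, x.2.comp (LinearMap.mulRight F u)), ?_, ?_, ?_, ?_, ?_⟩
    · have hinv : Function.Involutive
          (fun x : Λ × (Λ →ₗ[F] F) => (x.1, x.2.comp (LinearMap.mulRight F u))) := by
        intro x
        refine Prod.ext rfl ?_
        ext z
        simp [LinearMap.mulRight_apply, mul_assoc, huu]
      exact hinv.bijective
    · intro x y
      refine Prod.ext rfl ?_
      simp [LinearMap.add_comp]
    · intro c x
      refine Prod.ext rfl ?_
      simp [LinearMap.smul_comp]
    · intro x y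
      refine Prod.ext rfl ?_
      ext z
      simp only [LinearMap.add_comp, LinearMap.comp_apply, LinearMap.add_apply,
        LinearMap.mulLeft_apply, LinearMap.mulRight_apply]
      rw [mul_assoc z u (ζ x.1), key z x.1, mul_assoc y.1 z u, mul_assoc z x.1 u,
        ← mul_assoc z x.1 u]
    · refine Prod.ext rfl ?_
      simp
  -- the symmetric form
  · refine ⟨fun x y => x.2 (y.1 * u) + y.2 (x.1 * u), ?_, ?_, ?_, ?_, ?_, ?_, ?_, ?_⟩
    · intro x x' y
      simp only [Prod.fst_add, Prod.snd_add, LinearMap.add_apply, add_mul, map_add]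
      ring
    · intro x y y'
      simp only [Prod.fst_add, Prod.snd_add, LinearMap.add_apply, add_mul, map_add]
      ring
    · intro c x y
      simp only [Prod.smul_fst, Prod.smul_snd, LinearMap.smul_apply, smul_mul_assoc,
        map_smul, smul_eq_mul]
      ring
    · intro c x y
      simp only [Prod.smul_fst, Prod.smul_snd, LinearMap.smul_apply, smul_mul_assoc,
        map_smul, smul_eq_mul]
      ring
    · intro x hx
      have ha : x.1 * u = 0 := by
        rw [← Module.forall_dual_apply_eq_zero_iff F]
        intro φ
        have h := hx (0, φ)
        simpa using h
      have ha' : x.1 = 0 := by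
        have h := congrArg (· * u) ha
        simpa [mul_assoc, huu] using h
      have hf : x.2 = 0 := by
        ext b
        have h := hx (b * u, 0)
        simpa [mul_assoc, huu] using h
      exact Prod.ext ha' hf
    · intro x hx
      have ha : x.1 * u = 0 := by
        rw [← Module.forall_dual_apply_eq_zero_iff F]
        intro φ
        have h := hx (0, φ)
        simpa using h
      have ha' : x.1 = 0 := by
        have h := congrArg (· * u) ha
        simpa [mul_assoc, huu] using h
      have hf : x.2 = 0 := by
        ext b
        have h := hx (b * u, 0)
        simpa [mul_assoc, huu] using h
      exact Prod.ext ha' hf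
    · intro x y z
      simp only [LinearMap.add_apply, LinearMap.comp_apply, LinearMap.mulLeft_apply,
        LinearMap.mulRight_apply]
      rw [mul_assoc z.1 u (ζ x.1), key z.1 x.1, mul_assoc x.1 u (ζ y.1), key x.1 y.1]
      simp only [mul_assoc]
      ring
    · intro x y
      exact add_comm _ _
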